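/- Every ask that is matched by the optimal allocation is also matched by the Best-first allocation; precisely, the multiset of ask values matched by the optimal allocation (which matches the i-th highest bid to the i-th lowest ask until a pair is not matchable) is contained, as a multiset, in the multiset of ask values matched by the Best-first allocation. -/

import Mathlib

/-- Extract the minimum-value unmatched ask from a list, with a fixed
tie-breaking rule (earlier list positions are preferred). Returns the
minimum together with the remaining list. -/
noncomputable def extractMin : List ℝ → Option (ℝ × List ℝ)
  | [] => none
  | a :: as =>
    match extractMin as with
    | none => some (a, [])
    | some (m, rest) => if a ≤ m then some (a, as) else some (m, a :: rest)

/-- State of the Best-first (greedy) allocation: the currently unmatched asks,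
the matched (ask, bid) pairs in match order, and the unmatched bids. -/
structure BfState where
  unmatchedAsks : List ℝ
  matched : List (ℝ × ℝ)
  unmatchedBids : List ℝ

/-- One step of the Best-first allocation: when bid `b` arrives, match it to the
minimum unmatched ask `a` if `a ≤ b`; otherwise leave `b` unmatched. -/
noncomputable def bfStep (s : BfState) (b : ℝ) : BfState :=
  match extractMin s.unmatchedAsks with
  | some (a, rest) =>
      if a ≤ b then ⟨rest, s.matched ++ [(a, b)], s.unmatchedBids⟩
      else ⟨s.unmatchedAsks, s.matched, s.unmatchedBids ++ [b]⟩
  | none => ⟨s.unmatchedAsks, s.matched, s.unmatchedBids ++ [b]⟩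

/-- Run the Best-first allocation on the bids in arrival order. -/
noncomputable def bfRun (asks bids : List ℝ) : BfState :=
  bids.foldl bfStep ⟨asks, [], []⟩

/-- Insertion into an ascending-sorted list. -/
noncomputable def insertAsc (x : ℝ) : List ℝ → List ℝ
  | [] => [x]
  | y :: ys => if x ≤ y then x :: y :: ys else y :: insertAsc x ys

/-- Sort a list of reals in ascending order. -/
noncomputable def sortAsc (l : List ℝ) : List ℝ := l.foldr insertAsc []

/-- Sort a list of reals in descending order. -/
noncomputable def sortDesc (l : List ℝ) : List ℝ := (sortAsc l).reverse

/-- Match the i-th element of the first list with the i-th element of the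
second, stopping as soon as a pair is not matchable (`a ≤ b` fails). -/
noncomputable def matchPrefix : List ℝ → List ℝ → List (ℝ × ℝ)
  | a :: as, b :: bs => if a ≤ b then (a, b) :: matchPrefix as bs else []
  | _, _ => []

/-- The optimal allocation: match the highest bid with the lowest ask, the
second highest bid with the second lowest ask, and so on, stopping as soon as
a pair is not matchable. -/
noncomputable def optPairs (asks bids : List ℝ) : List (ℝ × ℝ) :=
  matchPrefix (sortAsc asks) (sortDesc bids)

/-- A feasible allocation: a partial matching (multiset of (ask, bid) pairs)
using each ask and each bid at most once, with `a ≤ b` for every matched pair. -/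
def IsFeasible (asks bids : List ℝ) (M : Multiset (ℝ × ℝ)) : Prop :=
  M.map Prod.fst ≤ (asks : Multiset ℝ) ∧
  M.map Prod.snd ≤ (bids : Multiset ℝ) ∧
  ∀ p ∈ M, p.1 ≤ p.2

/-- Social welfare of an allocation: sum of matched bid values plus the sum of
the values of the unmatched asks. -/
noncomputable def welfare (asks : List ℝ) (M : Multiset (ℝ × ℝ)) : ℝ :=
  (M.map Prod.snd).sum + ((asks : Multiset ℝ) - M.map Prod.fst).sum

/-- Social welfare of the Best-first allocation. -/
noncomputable def bfWelfare (asks bids : List ℝ) : ℝ :=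
  ((bfRun asks bids).matched.map Prod.snd).sum + (bfRun asks bids).unmatchedAsks.sum

/-- Maximum social welfare over all feasible allocations. -/
noncomputable def OptW (asks bids : List ℝ) : ℝ :=
  sSup {w : ℝ | ∃ M : Multiset (ℝ × ℝ), IsFeasible asks bids M ∧ w = welfare asks M}

section Aux

lemma extractMin_eq_none : ∀ (l : List ℝ), extractMin l = none → l = []
  | [], _ => rfl
  | a :: as, h => by
    unfold extractMin at h
    split at h
    · simp at h
    · split at h <;> simp at h

lemma extractMin_spec : ∀ (l : List ℝ) (a : ℝ) (rest : List ℝ),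
    extractMin l = some (a, rest) →
    (↑l : Multiset ℝ) = a ::ₘ ↑rest ∧ ∀ y ∈ l, a ≤ y
  | [], a, rest, h => by simp [extractMin] at h
  | x :: xs, a, rest, h => by
    unfold extractMin at h
    split at h
    next hEM =>
      have hxs : xs = [] := extractMin_eq_none xs hEM
      subst hxs
      simp only [Option.some_inj, Prod.mk.injEq] at h
      obtain ⟨rfl, rfl⟩ := h
      simp
    next m r hEM =>
      obtain ⟨hmr, hmin⟩ := extractMin_spec xs m r hEM
      split at h
      next hxm =>
        simp only [Option.some_inj, Prod.mk.injEq] at h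
        obtain ⟨rfl, rfl⟩ := h
        refine ⟨rfl, ?_⟩
        intro y hy
        rcases List.mem_cons.1 hy with rfl | hy
        · exact le_refl _
        · exact le_trans hxm (hmin y hy)
      next hxm =>
        simp only [Option.some_inj, Prod.mk.injEq] at h
        obtain ⟨rfl, rfl⟩ := h
        constructor
        · simp only [← Multiset.cons_coe, hmr]
          exact Multiset.cons_swap x m ↑r
        · intro y hy
          rcases List.mem_cons.1 hy with rfl | hy
          · exact le_of_not_ge hxm
          · exact hmin y hy

end Aux
section Aux2

lemma insertAsc_eq (x : ℝ) : ∀ (l : List ℝ), insertAsc x l = List.orderedInsert (· ≤ ·) x l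
  | [] => rfl
  | y :: ys => by
    simp only [insertAsc, List.orderedInsert, insertAsc_eq x ys]

lemma sortAsc_eq (l : List ℝ) : sortAsc l = List.insertionSort (· ≤ ·) l := by
  induction l with
  | nil => rfl
  | cons a l ih =>
    simp only [sortAsc, List.foldr] at *
    rw [ih, insertAsc_eq, List.insertionSort]
    rfl

lemma sortAsc_perm (l : List ℝ) : List.Perm (sortAsc l) l := by
  rw [sortAsc_eq]; exact List.perm_insertionSort _ l

lemma sortAsc_sorted (l : List ℝ) : (sortAsc l).Pairwise (· ≤ ·) := by
  rw [sortAsc_eq]; exact List.pairwise_insertionSort _ l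

lemma sortDesc_perm (l : List ℝ) : List.Perm (sortDesc l) l :=
  ((sortAsc l).reverse_perm).trans (sortAsc_perm l)

lemma sortDesc_sorted (l : List ℝ) : (sortDesc l).Pairwise (fun x y => y ≤ x) := by
  unfold sortDesc
  rw [List.pairwise_reverse]
  exact sortAsc_sorted l

lemma matchPrefix_map_fst : ∀ (as bs : List ℝ),
    (matchPrefix as bs).map Prod.fst = as.take (matchPrefix as bs).length
  | [], bs => by simp [matchPrefix]
  | a :: as, [] => by simp [matchPrefix]
  | a :: as, b :: bs => by
    by_cases h : a ≤ b
    · simp [matchPrefix, h, matchPrefix_map_fst as bs]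
    · simp [matchPrefix, h]

lemma matchPrefix_map_snd : ∀ (as bs : List ℝ),
    (matchPrefix as bs).map Prod.snd = bs.take (matchPrefix as bs).length
  | [], bs => by simp [matchPrefix]
  | a :: as, [] => by simp [matchPrefix]
  | a :: as, b :: bs => by
    by_cases h : a ≤ b
    · simp [matchPrefix, h, matchPrefix_map_snd as bs]
    · simp [matchPrefix, h]

lemma matchPrefix_mem : ∀ (as bs : List ℝ) (p : ℝ × ℝ), p ∈ matchPrefix as bs →
    p.1 ∈ as ∧ p.2 ∈ bs
  | [], bs, p, h => by simp [matchPrefix] at h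
  | a :: as, [], p, h => by simp [matchPrefix] at h
  | a :: as, b :: bs, p, h => by
    by_cases hab : a ≤ b
    · simp only [matchPrefix, if_pos hab, List.mem_cons] at h
      rcases h with rfl | h
      · exact ⟨List.mem_cons_self, List.mem_cons_self⟩
      · obtain ⟨h1, h2⟩ := matchPrefix_mem as bs p h
        exact ⟨List.mem_cons_of_mem _ h1, List.mem_cons_of_mem _ h2⟩
    · simp [matchPrefix, hab] at h

lemma matchPrefix_key : ∀ (as bs : List ℝ), as.Pairwise (· ≤ ·) →
    bs.Pairwise (fun x y => y ≤ x) →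
    ∀ p ∈ matchPrefix as bs, ∀ q ∈ matchPrefix as bs, p.1 ≤ q.2
  | [], bs, _, _, p, hp, q, hq => by simp [matchPrefix] at hp
  | a :: as, [], _, _, p, hp, q, hq => by simp [matchPrefix] at hp
  | a :: as, b :: bs, ha, hb, p, hp, q, hq => by
    have has : as.Pairwise (· ≤ ·) := ha.of_cons
    have hbs : bs.Pairwise (fun x y => y ≤ x) := hb.of_cons
    by_cases hab : a ≤ b
    · simp only [matchPrefix, if_pos hab, List.mem_cons] at hp hq
      rcases hp with rfl | hp <;> rcases hq with rfl | hq
      · exact hab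
      · -- p = (a,b), q in rest
        have hq1 : q.1 ∈ as := (matchPrefix_mem as bs q hq).1
        have h1 : a ≤ q.1 := (List.pairwise_cons.1 ha).1 _ hq1
        exact le_trans h1 (matchPrefix_key as bs has hbs q hq q hq)
      · -- p in rest, q = (a,b)
        have hp2 : p.2 ∈ bs := (matchPrefix_mem as bs p hp).2
        have h1 : p.2 ≤ b := (List.pairwise_cons.1 hb).1 _ hp2
        exact le_trans (matchPrefix_key as bs has hbs p hp p hp) h1
      · exact matchPrefix_key as bs has hbs p hp q hq
    · simp [matchPrefix, hab] at hp

lemma list_exists_max : ∀ (l : List ℝ), l ≠ [] → ∃ t ∈ l, ∀ x ∈ l, x ≤ t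
  | [], h => absurd rfl h
  | a :: l, _ => by
    rcases eq_or_ne l [] with rfl | hl
    · exact ⟨a, List.mem_cons_self, by simp⟩
    · obtain ⟨t, htl, ht⟩ := list_exists_max l hl
      rcases le_total a t with h | h
      · exact ⟨t, List.mem_cons_of_mem _ htl, fun x hx => by
          rcases List.mem_cons.1 hx with rfl | hx
          · exact h
          · exact ht x hx⟩
      · exact ⟨a, List.mem_cons_self, fun x hx => by
          rcases List.mem_cons.1 hx with rfl | hx
          · exact le_refl _
          · exact le_trans (ht x hx) h⟩

lemma lemA : ∀ (L : List ℝ), L.Pairwise (· ≤ ·) → ∀ (S T : Multiset ℝ),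
    S + T = (L : Multiset ℝ) → (∀ x ∈ S, ∀ y ∈ T, x ≤ y) →
    ∀ k : ℕ, k ≤ Multiset.card S → (↑(L.take k) : Multiset ℝ) ≤ S
  | [], _, S, T, hST, _, k, hk => by
    simp only [List.take_nil]
    exact Multiset.zero_le S
  | a :: L', hsort, S, T, hST, hord, k, hk => by
    cases k with
    | zero => exact Multiset.zero_le S
    | succ k' =>
      have hScard : 0 < Multiset.card S := lt_of_lt_of_le (Nat.succ_pos k') hk
      have haS : a ∈ S := by
        by_contra haS
        have haST : a ∈ S + T := by
          rw [hST]
          exact List.mem_cons_self (a := a) (l := L')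
        have haT : a ∈ T := (Multiset.mem_add.1 haST).resolve_left haS
        obtain ⟨x, hx⟩ := Multiset.card_pos_iff_exists_mem.1 hScard
        have hxa : x ≤ a := hord x hx a haT
        have hx2 : x ∈ (↑(a :: L') : Multiset ℝ) := by
          rw [← hST]; exact Multiset.mem_add.2 (Or.inl hx)
        have : x = a ∨ x ∈ L' := by simpa using hx2
        rcases this with rfl | hxL
        · exact haS hx
        · have : a ≤ x := (List.pairwise_cons.1 hsort).1 x hxL
          have : x = a := le_antisymm hxa this
          exact haS (this ▸ hx)
      have hS' : S.erase a + T = (↑L' : Multiset ℝ) := by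
        have h1 : a ::ₘ (S.erase a + T) = a ::ₘ (↑L' : Multiset ℝ) := by
          rw [← Multiset.cons_add, Multiset.cons_erase haS, hST, Multiset.cons_coe]
        exact (Multiset.cons_inj_right a).1 h1
      have hord' : ∀ x ∈ S.erase a, ∀ y ∈ T, x ≤ y :=
        fun x hx y hy => hord x (Multiset.mem_of_mem_erase hx) y hy
      have hk' : k' ≤ Multiset.card (S.erase a) := by
        rw [Multiset.card_erase_of_mem haS]
        exact Nat.le_sub_one_of_lt (Nat.lt_of_succ_le hk)
      have ih := lemA L' hsort.of_cons (S.erase a) T hS' hord' k' hk'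
      have : (↑((a :: L').take (k' + 1)) : Multiset ℝ) = a ::ₘ ↑(L'.take k') := by
        simp [List.take]
      rw [this, ← Multiset.cons_erase haS]
      exact Multiset.cons_le_cons a ih

end Aux2
section Aux3

lemma bfStep_match {s : BfState} {a b : ℝ} {rest : List ℝ}
    (hEM : extractMin s.unmatchedAsks = some (a, rest)) (hab : a ≤ b) :
    bfStep s b = ⟨rest, s.matched ++ [(a, b)], s.unmatchedBids⟩ := by
  unfold bfStep; rw [hEM]; simp [hab]

lemma bfStep_nomatch_some {s : BfState} {a b : ℝ} {rest : List ℝ}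
    (hEM : extractMin s.unmatchedAsks = some (a, rest)) (hab : ¬ a ≤ b) :
    bfStep s b = ⟨s.unmatchedAsks, s.matched, s.unmatchedBids ++ [b]⟩ := by
  unfold bfStep; rw [hEM]; simp [hab]

lemma bfStep_nomatch_none {s : BfState} {b : ℝ}
    (hEM : extractMin s.unmatchedAsks = none) :
    bfStep s b = ⟨s.unmatchedAsks, s.matched, s.unmatchedBids ++ [b]⟩ := by
  unfold bfStep; rw [hEM]

lemma bf_fold_inv (t : ℝ) (k : ℕ) :
    ∀ (bl : List ℝ) (s : BfState),
      (∀ x ∈ s.matched.map Prod.fst, ∀ y ∈ s.unmatchedAsks, x ≤ y) →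
      k ≤ s.matched.length + Multiset.countP (fun x => x ≤ t) ↑s.unmatchedAsks →
      ((↑((bl.foldl bfStep s).unmatchedAsks) + ↑((bl.foldl bfStep s).matched.map Prod.fst) :
          Multiset ℝ) = ↑s.unmatchedAsks + ↑(s.matched.map Prod.fst)) ∧
      (∀ x ∈ (bl.foldl bfStep s).matched.map Prod.fst,
          ∀ y ∈ (bl.foldl bfStep s).unmatchedAsks, x ≤ y) ∧
      s.matched.length ≤ (bl.foldl bfStep s).matched.length ∧
      min k (s.matched.length + Multiset.countP (fun x => t ≤ x) ↑bl) ≤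
        (bl.foldl bfStep s).matched.length
  | [], s, hord, hcount => by
    refine ⟨rfl, hord, le_refl _, ?_⟩
    simp only [List.foldl]
    have h0 : Multiset.countP (fun x => t ≤ x) (↑([] : List ℝ) : Multiset ℝ) = 0 := rfl
    rw [h0]
    exact le_trans (min_le_right _ _) (by simp)
  | b :: bl', s, hord, hcount => by
    have hfold : (b :: bl').foldl bfStep s = bl'.foldl bfStep (bfStep s b) := rfl
    rw [hfold]
    have hcntcons : (Multiset.countP (fun x => t ≤ x) (↑(b :: bl') : Multiset ℝ)) =
        Multiset.countP (fun x => t ≤ x) (↑bl' : Multiset ℝ) + if t ≤ b then 1 else 0 := by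
      rw [← Multiset.cons_coe, Multiset.countP_cons]
    rcases hEM : extractMin s.unmatchedAsks with _ | ⟨a, rest⟩
    · -- no asks at all: no match this step
      have hstep : bfStep s b = ⟨s.unmatchedAsks, s.matched, s.unmatchedBids ++ [b]⟩ :=
        bfStep_nomatch_none hEM
      rw [hstep]
      obtain ⟨C1, C2, C3, C4⟩ := bf_fold_inv t k bl'
        ⟨s.unmatchedAsks, s.matched, s.unmatchedBids ++ [b]⟩ hord hcount
      refine ⟨C1, C2, C3, ?_⟩
      rw [hcntcons]
      by_cases htb : t ≤ b
      · have hnil : s.unmatchedAsks = [] := extractMin_eq_none _ hEM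
        have h0 : Multiset.countP (fun x => x ≤ t) (↑s.unmatchedAsks : Multiset ℝ) = 0 := by
          rw [hnil]; rfl
        rw [h0, Nat.add_zero] at hcount
        exact le_trans (min_le_left _ _) (le_trans hcount C3)
      · rw [if_neg htb, Nat.add_zero]
        exact C4
    · obtain ⟨hmr, hmin⟩ := extractMin_spec _ _ _ hEM
      by_cases hab : a ≤ b
      · -- match happens
        have hstep : bfStep s b = ⟨rest, s.matched ++ [(a, b)], s.unmatchedBids⟩ :=
          bfStep_match hEM hab
        rw [hstep]
        have hrest_mem : ∀ y ∈ rest, y ∈ s.unmatchedAsks := by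
          intro y hy
          have : y ∈ (↑s.unmatchedAsks : Multiset ℝ) := by
            rw [hmr]; exact Multiset.mem_cons_of_mem (Multiset.mem_coe.2 hy)
          exact Multiset.mem_coe.1 this
        have hord1 : ∀ x ∈ ((s.matched ++ [(a, b)]).map Prod.fst), ∀ y ∈ rest, x ≤ y := by
          intro x hx y hy
          rw [List.map_append] at hx
          rcases List.mem_append.1 hx with hx | hx
          · exact hord x hx y (hrest_mem y hy)
          · simp only [List.map_cons, List.map_nil, List.mem_singleton] at hx
            subst hx
            exact hmin y (hrest_mem y hy)
        have hcu : Multiset.countP (fun x => x ≤ t) (↑s.unmatchedAsks : Multiset ℝ) ≤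
            Multiset.countP (fun x => x ≤ t) (↑rest : Multiset ℝ) + 1 := by
          rw [hmr, Multiset.countP_cons]
          split <;> omega
        have hcount1 : k ≤ (s.matched ++ [(a, b)]).length +
            Multiset.countP (fun x => x ≤ t) (↑rest : Multiset ℝ) := by
          simp only [List.length_append, List.length_cons, List.length_nil]
          omega
        obtain ⟨C1, C2, C3, C4⟩ := bf_fold_inv t k bl'
          ⟨rest, s.matched ++ [(a, b)], s.unmatchedBids⟩ hord1 hcount1
        refine ⟨?_, C2, ?_, ?_⟩
        · rw [C1]
          show (↑rest + ↑((s.matched ++ [(a, b)]).map Prod.fst) : Multiset ℝ) =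
            ↑s.unmatchedAsks + ↑(s.matched.map Prod.fst)
          have h2 : (↑((s.matched ++ [(a, b)]).map Prod.fst) : Multiset ℝ) =
              ↑(s.matched.map Prod.fst) + {a} := by
            rw [List.map_append, ← Multiset.coe_add]
            rfl
          rw [h2, hmr]
          have h3 : (a ::ₘ (↑rest : Multiset ℝ)) = {a} + ↑rest := (Multiset.singleton_add a _).symm
          rw [h3]
          abel
        · refine le_trans ?_ C3
          simp
        · rw [hcntcons]
          refine le_trans (min_le_min (le_refl k) ?_) C4
          show s.matched.length + (Multiset.countP (fun x => t ≤ x) (↑bl' : Multiset ℝ) +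
              if t ≤ b then 1 else 0) ≤ (s.matched ++ [(a, b)]).length +
              Multiset.countP (fun x => t ≤ x) (↑bl' : Multiset ℝ)
          simp only [List.length_append, List.length_cons, List.length_nil]
          split <;> omega
      · -- ask too expensive: no match
        have hstep : bfStep s b = ⟨s.unmatchedAsks, s.matched, s.unmatchedBids ++ [b]⟩ :=
          bfStep_nomatch_some hEM hab
        rw [hstep]
        obtain ⟨C1, C2, C3, C4⟩ := bf_fold_inv t k bl'
          ⟨s.unmatchedAsks, s.matched, s.unmatchedBids ++ [b]⟩ hord hcount
        refine ⟨C1, C2, C3, ?_⟩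
        rw [hcntcons]
        by_cases htb : t ≤ b
        · have h0 : Multiset.countP (fun x => x ≤ t) (↑s.unmatchedAsks : Multiset ℝ) = 0 := by
            rw [Multiset.countP_eq_zero]
            intro y hy
            have hay : a ≤ y := hmin y (Multiset.mem_coe.1 hy)
            have hyt : ¬ y ≤ t := fun hyt => hab (le_trans (le_trans hay hyt) htb)
            simpa using hyt
          rw [h0, Nat.add_zero] at hcount
          exact le_trans (min_le_left _ _) (le_trans hcount C3)
        · rw [if_neg htb, Nat.add_zero]
          exact C4

end Aux3
/-- The multiset of ask values matched by the optimal
allocation is contained, as a multiset, in the multiset of ask values matched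
by the Best-first allocation. -/
theorem opt_matched_asks_subset_bf (asks bids : List ℝ)
    (ha : ∀ a ∈ asks, 0 ≤ a) (hb : ∀ b ∈ bids, 0 ≤ b) :
    (↑((optPairs asks bids).map Prod.fst) : Multiset ℝ) ≤
      ↑((bfRun asks bids).matched.map Prod.fst) := by
  have hPdef : optPairs asks bids = matchPrefix (sortAsc asks) (sortDesc bids) := rfl
  by_cases hP0 : matchPrefix (sortAsc asks) (sortDesc bids) = []
  · rw [hPdef, hP0]
    simp
  · have hAsort : (sortAsc asks).Pairwise (· ≤ ·) := sortAsc_sorted asks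
    have hBsort : (sortDesc bids).Pairwise (fun x y => y ≤ x) := sortDesc_sorted bids
    have hkey := matchPrefix_key _ _ hAsort hBsort
    set P := matchPrefix (sortAsc asks) (sortDesc bids) with hP
    have hFne : P.map Prod.fst ≠ [] := by
      intro h
      exact hP0 (List.map_eq_nil_iff.1 h)
    obtain ⟨t, htF, htmax⟩ := list_exists_max _ hFne
    obtain ⟨p₀, hp₀, hp₀t⟩ := List.mem_map.1 htF
    have hSt : ∀ q ∈ P, t ≤ q.2 := fun q hq => hp₀t ▸ hkey p₀ hp₀ q hq
    -- the matched asks are a sub-multiset of asks, all ≤ t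
    have hFperm : (↑(P.map Prod.fst) : Multiset ℝ) ≤ (↑asks : Multiset ℝ) := by
      rw [matchPrefix_map_fst]
      refine le_trans (Multiset.coe_le.2 (List.take_sublist _ _).subperm) ?_
      exact le_of_eq (Multiset.coe_eq_coe.2 (sortAsc_perm asks))
    have hSperm : (↑(P.map Prod.snd) : Multiset ℝ) ≤ (↑bids : Multiset ℝ) := by
      rw [matchPrefix_map_snd]
      refine le_trans (Multiset.coe_le.2 (List.take_sublist _ _).subperm) ?_
      exact le_of_eq (Multiset.coe_eq_coe.2 (sortDesc_perm bids))
    have hcountA : P.length ≤ Multiset.countP (fun x => x ≤ t) (↑asks : Multiset ℝ) := by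
      have h1 : Multiset.countP (fun x => x ≤ t) (↑(P.map Prod.fst) : Multiset ℝ) =
          Multiset.card (↑(P.map Prod.fst) : Multiset ℝ) :=
        Multiset.countP_eq_card.2 (fun x hx => htmax x (Multiset.mem_coe.1 hx))
      have h2 : Multiset.card (↑(P.map Prod.fst) : Multiset ℝ) = P.length := by simp
      rw [← h2, ← h1]
      exact Multiset.countP_le_of_le _ hFperm
    have hcountB : P.length ≤ Multiset.countP (fun x => t ≤ x) (↑bids : Multiset ℝ) := by
      have h1 : Multiset.countP (fun x => t ≤ x) (↑(P.map Prod.snd) : Multiset ℝ) =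
          Multiset.card (↑(P.map Prod.snd) : Multiset ℝ) := by
        refine Multiset.countP_eq_card.2 (fun x hx => ?_)
        obtain ⟨q, hq, rfl⟩ := List.mem_map.1 (Multiset.mem_coe.1 hx)
        exact hSt q hq
      have h2 : Multiset.card (↑(P.map Prod.snd) : Multiset ℝ) = P.length := by simp
      rw [← h2, ← h1]
      exact Multiset.countP_le_of_le _ hSperm
    -- run the greedy algorithm
    obtain ⟨C1, C2, C3, C4⟩ := bf_fold_inv t P.length bids ⟨asks, [], []⟩
      (by intro x hx; simp at hx) (by simpa using hcountA)
    have hbfRun : bfRun asks bids = bids.foldl bfStep ⟨asks, [], []⟩ := rfl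
    set s' := bids.foldl bfStep (⟨asks, [], []⟩ : BfState) with hs'
    have hkm : P.length ≤ s'.matched.length := by
      refine le_trans ?_ C4
      have : min P.length ((⟨asks, [], []⟩ : BfState).matched.length +
          Multiset.countP (fun x => t ≤ x) (↑bids : Multiset ℝ)) = P.length := by
        refine min_eq_left ?_
        show P.length ≤ 0 + _
        omega
      rw [this]
    have hST : (↑(s'.matched.map Prod.fst) + ↑s'.unmatchedAsks : Multiset ℝ) =
        (↑(sortAsc asks) : Multiset ℝ) := by
      rw [add_comm, C1]
      show (↑asks + ↑(List.map Prod.fst ([] : List (ℝ × ℝ))) : Multiset ℝ) = ↑(sortAsc asks)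
      simp [Multiset.coe_eq_coe.2 (sortAsc_perm asks)]
    have hord' : ∀ x ∈ (↑(s'.matched.map Prod.fst) : Multiset ℝ),
        ∀ y ∈ (↑s'.unmatchedAsks : Multiset ℝ), x ≤ y :=
      fun x hx y hy => C2 x (Multiset.mem_coe.1 hx) y (Multiset.mem_coe.1 hy)
    have hcard : P.length ≤ Multiset.card (↑(s'.matched.map Prod.fst) : Multiset ℝ) := by
      simpa using hkm
    have hmain := lemA (sortAsc asks) hAsort (↑(s'.matched.map Prod.fst)) (↑s'.unmatchedAsks)
      hST hord' P.length hcard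
    rw [hbfRun, hPdef, hP, matchPrefix_map_fst, ← hP]
    exact hmain
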